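/- Suppose for each ℓ ∈ {1,...,q}, α*_ℓ ∈ ℝ^k_{>0} with Σ_h α*_{hℓ} = 1 achieves per-context rate z_ℓ > 0 in the context-free problem (i.e., min_{i ≤ m < j} R^ℓ_{ij}(α*_{iℓ}, α*_{jℓ}) = z_ℓ). Define r_ℓ = (1/z_ℓ)/Σ_{ℓ'} (1/z_{ℓ'}) and r*_{hℓ} = r_ℓ · α*_{hℓ}. Then Σ_{h,ℓ} r*_{hℓ} = 1 and min over all (i,j,ℓ) of R^ℓ_{ij}(r*_{iℓ}, r*_{jℓ}) equals z* = 1/Σ_{ℓ'} (1/z_{ℓ'}), and this common value is attained in every context. -/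

import Mathlib

/-- Decomposition of the context-dependent asymptotically optimal sampling ratios:
scaling per-context optimal allocations `α*_ℓ` by `r_ℓ = (1/z_ℓ)/Σ_{ℓ'}(1/z_{ℓ'})`
yields a feasible allocation whose overall min rate equals `z* = 1/Σ_{ℓ'}(1/z_{ℓ'})`,
and this common value is attained within every context. -/
theorem context_rate_decomposition
    (k q m : ℕ) (hm : 1 ≤ m) (hmk : m < k) (hq : 1 ≤ q)
    (y σ : Fin k → Fin q → ℝ)
    (hσ : ∀ h ℓ, 0 < σ h ℓ)
    (hy : ∀ ℓ, ∀ i j : Fin k, (i : ℕ) < m → m ≤ (j : ℕ) → y j ℓ < y i ℓ)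
    (R : Fin k → Fin k → Fin q → ℝ → ℝ → ℝ)
    (hR : ∀ i j ℓ a b, R i j ℓ a b =
      (y i ℓ - y j ℓ) ^ 2 / (2 * ((σ i ℓ) ^ 2 / a + (σ j ℓ) ^ 2 / b)))
    (pairs : Finset (Fin k × Fin k))
    (hpairs : pairs = Finset.univ.filter
      (fun p : Fin k × Fin k => (p.1 : ℕ) < m ∧ m ≤ (p.2 : ℕ)))
    (hpne : pairs.Nonempty)
    (α : Fin k → Fin q → ℝ) (z : Fin q → ℝ)
    (hα : ∀ h ℓ, 0 < α h ℓ) (hαsum : ∀ ℓ, ∑ h : Fin k, α h ℓ = 1)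
    (hz : ∀ ℓ, 0 < z ℓ)
    (hach : ∀ ℓ, pairs.inf' hpne (fun p => R p.1 p.2 ℓ (α p.1 ℓ) (α p.2 ℓ)) = z ℓ)
    (r : Fin q → ℝ)
    (hr : ∀ ℓ, r ℓ = (1 / z ℓ) / ∑ ℓ' : Fin q, 1 / z ℓ')
    (rstar : Fin k → Fin q → ℝ)
    (hrs : ∀ h ℓ, rstar h ℓ = r ℓ * α h ℓ)
    (hqne : (Finset.univ : Finset (Fin q)).Nonempty)
    (htne : (Finset.univ : Finset (Fin q × Fin k × Fin k)).Nonempty) :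
    (∑ h : Fin k, ∑ ℓ : Fin q, rstar h ℓ = 1) ∧
    ((pairs ×ˢ (Finset.univ : Finset (Fin q))).inf'
      (hpne.product hqne)
      (fun p => R p.1.1 p.1.2 p.2 (rstar p.1.1 p.2) (rstar p.1.2 p.2))
      = 1 / ∑ ℓ' : Fin q, 1 / z ℓ') ∧
    (∀ ℓ : Fin q, pairs.inf' hpne
      (fun p => R p.1 p.2 ℓ (rstar p.1 ℓ) (rstar p.2 ℓ))
      = 1 / ∑ ℓ' : Fin q, 1 / z ℓ') := by

  have hS : 0 < ∑ ℓ' : Fin q, 1 / z ℓ' :=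
    Finset.sum_pos (fun ℓ _ => by have := hz ℓ; positivity) hqne
  have hrpos : ∀ ℓ, 0 < r ℓ := fun ℓ => by
    rw [hr]; have := hz ℓ; positivity
  have hom : ∀ (i j : Fin k) (ℓ : Fin q) (c a b : ℝ), 0 < c → 0 < a → 0 < b →
      R i j ℓ (c * a) (c * b) = c * R i j ℓ a b := by
    intro i j ℓ c a b hc ha hb
    rw [hR, hR]
    have h1 := hσ i ℓ
    have h2 := hσ j ℓ
    have hD : σ i ℓ ^ 2 / a + σ j ℓ ^ 2 / b ≠ 0 := by positivity
    field_simp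
  have hslice : ∀ ℓ : Fin q, pairs.inf' hpne
      (fun p => R p.1 p.2 ℓ (rstar p.1 ℓ) (rstar p.2 ℓ))
      = 1 / ∑ ℓ' : Fin q, 1 / z ℓ' := by
    intro ℓ
    have h1 : (fun p : Fin k × Fin k => R p.1 p.2 ℓ (rstar p.1 ℓ) (rstar p.2 ℓ))
        = fun p => r ℓ * R p.1 p.2 ℓ (α p.1 ℓ) (α p.2 ℓ) := by
      funext p
      rw [hrs, hrs]
      exact hom _ _ _ _ _ _ (hrpos ℓ) (hα _ _) (hα _ _)
    rw [h1]
    have hmono : Monotone (fun x : ℝ => r ℓ * x) :=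
      fun a b hab => mul_le_mul_of_nonneg_left hab (hrpos ℓ).le
    have h2 := Finset.apply_inf'_eq_inf'_comp (f := fun p : Fin k × Fin k =>
        R p.1 p.2 ℓ (α p.1 ℓ) (α p.2 ℓ)) hpne (fun x : ℝ => r ℓ * x)
      (fun x y => hmono.map_min)
    rw [hach ℓ] at h2
    simp only [Function.comp] at h2
    rw [← h2, hr]
    have hzℓ := (hz ℓ).ne'
    field_simp
  refine ⟨?_, ?_, hslice⟩
  · rw [Finset.sum_comm]
    have h1 : ∀ ℓ : Fin q, ∑ h : Fin k, rstar h ℓ = r ℓ := by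
      intro ℓ
      simp only [hrs]
      rw [← Finset.mul_sum, hαsum, mul_one]
    rw [Finset.sum_congr rfl (fun ℓ _ => h1 ℓ)]
    have h2 : ∀ ℓ : Fin q, r ℓ = (1 / z ℓ) / ∑ ℓ' : Fin q, 1 / z ℓ' := hr
    rw [Finset.sum_congr rfl (fun ℓ _ => h2 ℓ), ← Finset.sum_div,
      div_self hS.ne']
  · apply le_antisymm
    · obtain ⟨ℓ0, -⟩ := id hqne
      obtain ⟨p0, hp0, hval⟩ := Finset.exists_mem_eq_inf' hpne
        (fun p : Fin k × Fin k => R p.1 p.2 ℓ0 (rstar p.1 ℓ0) (rstar p.2 ℓ0))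
      have hmem : (p0, ℓ0) ∈ pairs ×ˢ (Finset.univ : Finset (Fin q)) :=
        Finset.mem_product.mpr ⟨hp0, Finset.mem_univ _⟩
      have := Finset.inf'_le
        (fun p : (Fin k × Fin k) × Fin q =>
          R p.1.1 p.1.2 p.2 (rstar p.1.1 p.2) (rstar p.1.2 p.2)) hmem
      calc (pairs ×ˢ (Finset.univ : Finset (Fin q))).inf' (hpne.product hqne)
            (fun p => R p.1.1 p.1.2 p.2 (rstar p.1.1 p.2) (rstar p.1.2 p.2))
          ≤ R p0.1 p0.2 ℓ0 (rstar p0.1 ℓ0) (rstar p0.2 ℓ0) := this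
        _ = 1 / ∑ ℓ' : Fin q, 1 / z ℓ' := by rw [← hval, hslice ℓ0]
    · apply Finset.le_inf'
      intro p hp
      have hp1 : p.1 ∈ pairs := (Finset.mem_product.mp hp).1
      have := Finset.inf'_le
        (fun pp : Fin k × Fin k => R pp.1 pp.2 p.2 (rstar pp.1 p.2) (rstar pp.2 p.2)) hp1
      rw [hslice p.2] at this
      exact this
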